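/- If P is a subidentity (P ⊆ 1_σ), then sequential composition distributes over union on the left: P · (S ∪ T) = P · S ∪ P · T for all multirelations S, T. -/
import Mathlib


open Set

/-- Sequential composition of multirelations (Peleg). -/
def mseq {X : Type*} (R S : Set (X × Set X)) : Set (X × Set X) :=
  {p | ∃ B, (p.1, B) ∈ R ∧ ∃ f : X → Set X, (∀ b ∈ B, (b, f b) ∈ S) ∧ p.2 = ⋃ b ∈ B, f b}

/-- The unit of sequential composition. -/
def sunit (X : Type*) : Set (X × Set X) := {p | p.2 = {p.1}}

/-- Parallel (concurrent) composition of multirelations. -/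
def mpar {X : Type*} (R S : Set (X × Set X)) : Set (X × Set X) :=
  {p | ∃ A B, (p.1, A) ∈ R ∧ (p.1, B) ∈ S ∧ p.2 = A ∪ B}

/-- The unit of parallel composition. -/
def punit (X : Type*) : Set (X × Set X) := {p | p.2 = (∅ : Set X)}

/-- Domain of a multirelation. -/
def mdom {X : Type*} (R : Set (X × Set X)) : Set (X × Set X) :=
  {p | p.2 = {p.1} ∧ ∃ A, (p.1, A) ∈ R}

/-- Antidomain of a multirelation. -/
def mantidom {X : Type*} (R : Set (X × Set X)) : Set (X × Set X) :=
  {p | p.2 = {p.1} ∧ ¬ ∃ A, (p.1, A) ∈ R}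

/-- Diamond operator. -/
def mdia {X : Type*} (R P : Set (X × Set X)) : Set (X × Set X) := mdom (mseq R P)

theorem stmt10 {X : Type*} (P S T : Set (X × Set X)) (hP : P ⊆ sunit X) :
    mseq P (S ∪ T) = mseq P S ∪ mseq P T := by
  ext ⟨a, A⟩
  constructor
  · rintro ⟨B, hB, f, hf, rfl⟩
    have hBa : B = {a} := hP hB
    subst hBa
    have := hf a (by simp)
    rcases this with h | h
    · exact Or.inl ⟨{a}, hB, f, fun b hb => by simp at hb; subst hb; exact h, rfl⟩
    · exact Or.inr ⟨{a}, hB, f, fun b hb => by simp at hb; subst hb; exact h, rfl⟩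
  · rintro (⟨B, hB, f, hf, rfl⟩ | ⟨B, hB, f, hf, rfl⟩)
    · exact ⟨B, hB, f, fun b hb => Or.inl (hf b hb), rfl⟩
    · exact ⟨B, hB, f, fun b hb => Or.inr (hf b hb), rfl⟩
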